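/- arXiv:2408.15692 — 2 statements merged into one kernel-verified Lean document; each statement's English description precedes it below -/
import Mathlib

section
/- Let 𝔉 be an iterated graph system satisfying Assumption (GR), let θ = [w^{(1)},…,w^{(l)}] be a path in G_n, let m ∈ ℕ, and fix v^{(1)} ∈ W_m. Then there is at most one choice of words v^{(2)},…,v^{(l)} ∈ W_m such that [w^{(1)}v^{(1)}, w^{(2)}v^{(2)}, …, w^{(l)}v^{(l)}] is a path in G_{n+m}. -/
namespace IGSP

/-- An iterated graph system: a finite connected oriented graph `G₁ = (S, E)`, a set of
types `T` with a surjective typing map on edges, and nonempty gluing rules `I_t ⊆ S × S`. -/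
structure System (S T : Type) where
  E : S → S → Prop
  not_both : ∀ x y : S, E x y → ¬ E y x
  irrefl : ∀ x : S, ¬ E x x
  conn : ∀ x y : S, Relation.ReflTransGen (fun a b => E a b ∨ E b a) x y
  typ : S → S → T
  typ_surj : ∀ t : T, ∃ x y, E x y ∧ typ x y = t
  glue : T → S → S → Prop
  glue_nonempty : ∀ t : T, ∃ x y, glue t x y

variable {S T : Type}

/-- Words of length `m` over the symbol set `S`. -/
abbrev Word (S : Type) (m : ℕ) := Fin m → S

open Classical in
/-- The replacement graphs together with their typing functions, defined by recursion on
the length of words: `G₁ = (S,E)` and an oriented edge `(w,v) ∈ E_{m+1}` holds iff either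
the length-`m` prefixes agree and the last symbols form an edge of `G₁`, or the prefixes
form an edge of `E_m` and the last symbols belong to the gluing rule of its type. -/
noncomputable def replData [Nonempty T] (F : System S T) :
    (L : ℕ) → (Word S L → Word S L → Prop) × (Word S L → Word S L → T)
  | 0 => ⟨fun _ _ => False, fun _ _ => Classical.arbitrary T⟩
  | 1 => ⟨fun w v => F.E (w 0) (v 0), fun w v => F.typ (w 0) (v 0)⟩
  | L + 2 =>
      ⟨fun w v =>
        (Fin.init w = Fin.init v ∧ F.E (w (Fin.last (L + 1))) (v (Fin.last (L + 1)))) ∨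
        ((replData F (L + 1)).1 (Fin.init w) (Fin.init v) ∧
          F.glue ((replData F (L + 1)).2 (Fin.init w) (Fin.init v))
            (w (Fin.last (L + 1))) (v (Fin.last (L + 1)))),
       fun w v =>
        if Fin.init w = Fin.init v then F.typ (w (Fin.last (L + 1))) (v (Fin.last (L + 1)))
        else (replData F (L + 1)).2 (Fin.init w) (Fin.init v)⟩

/-- The oriented edge relation of the replacement graph on words of length `L`. -/
def edge [Nonempty T] (F : System S T) (L : ℕ) (w v : Word S L) : Prop :=
  (replData F L).1 w v

/-- The typing function of the replacement graph on words of length `L`. -/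
noncomputable def etyp [Nonempty T] (F : System S T) (L : ℕ) (w v : Word S L) : T :=
  (replData F L).2 w v

/-- The unoriented edge ("{w,v} ∈ E_L") relation. -/
def adjW [Nonempty T] (F : System S T) (L : ℕ) (w v : Word S L) : Prop :=
  edge F L w v ∨ edge F L v w

/-- The replacement graph `G_L` as a simple graph on words of length `L`. -/
noncomputable def replGraph [Nonempty T] (F : System S T) (L : ℕ) : SimpleGraph (Word S L) where
  Adj w v := w ≠ v ∧ adjW F L w v
  symm := by
    constructor
    intro w v h
    exact ⟨Ne.symm h.1, Or.symm h.2⟩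
  loopless := by
    constructor
    intro w h
    exact h.1 rfl

/-- The degree of a word `w` in the replacement graph `G_L`: the number of `v` with
`{w,v} ∈ E_L`. -/
noncomputable def degGm [Nonempty T] (F : System S T) (L : ℕ) (w : Word S L) : ℕ :=
  {v : Word S L | adjW F L w v}.ncard

/-- `I_{t,+}`, the set of symbols occurring as the first coordinate of the gluing rule. -/
def Iplus (F : System S T) (t : T) : Set S := {a | ∃ b, F.glue t a b}

/-- `I_{t,-}`, the set of symbols occurring as the second coordinate of the gluing rule. -/
def Iminus (F : System S T) (t : T) : Set S := {b | ∃ a, F.glue t a b}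

/-- `I_{t,★}` where the orientation `★` is encoded by a boolean: `true = +`, `false = -`. -/
def Iset (F : System S T) (t : T) : Bool → Set S
  | true => Iplus F t
  | false => Iminus F t

/-- `I_{t,★}^{(m)} = (I_{t,★})^m ⊆ W_m`. -/
def IsetW (F : System S T) (t : T) (b : Bool) (m : ℕ) : Set (Word S m) :=
  {w | ∀ i, w i ∈ Iset F t b}

/-- The boundary `∂G_m = ⋃_{(t,★)} I_{t,★}^{(m)}`. -/
def boundaryW (F : System S T) (m : ℕ) : Set (Word S m) :=
  ⋃ (t : T) (b : Bool), IsetW F t b m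

/-- (GR1): every symbol has at most one gluing partner for each type and orientation. -/
def GR1 (F : System S T) : Prop :=
  ∀ (t : T) (s : S), {b | F.glue t s b}.Subsingleton ∧ {a | F.glue t a s}.Subsingleton

/-- (GR2): for no type, orientation and symbol are the gluing-partner count and the
corresponding oriented degree in `G₁` simultaneously nonzero. -/
def GR2 (F : System S T) : Prop :=
  ∀ (t : T) (s : S),
    ¬ ((∃ b, F.glue t s b) ∧ ∃ b, F.E s b ∧ F.typ s b = t) ∧
    ¬ ((∃ a, F.glue t a s) ∧ ∃ a, F.E a s ∧ F.typ a s = t)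

/-- (GR3): `I_{t,-} ∩ I_{t,+} = ∅` for every type `t`. -/
def GR3 (F : System S T) : Prop := ∀ t : T, Iminus F t ∩ Iplus F t = ∅

/-- Assumption (GR). -/
def GR (F : System S T) : Prop := GR1 F ∧ GR2 F ∧ GR3 F

/-- A path in the replacement graph `G_L`: a nonempty list of words with consecutive
entries joined by an edge. -/
def IsPath [Nonempty T] (F : System S T) (L : ℕ) (θ : List (Word S L)) : Prop :=
  θ ≠ [] ∧ θ.Chain' (adjW F L)

open Classical in
/-- The projection `π_{L,k}` of a path: take length-`k` prefixes and remove consecutive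
repetitions. -/
noncomputable def proj {k L : ℕ} (h : k ≤ L) (θ : List (Word S L)) : List (Word S k) :=
  (θ.map fun w => fun i => w (Fin.castLE h i)).destutter (· ≠ ·)

/-- An intersection path in `G_{m+1}`: a path admitting a compatible sequence of paths at
all levels with uniformly bounded lengths. -/
def IsIntersectionPath [Nonempty T] (F : System S T) (m : ℕ) (θ : List (Word S (m + 1))) :
    Prop :=
  IsPath F (m + 1) θ ∧
  ∃ Θ : (n : ℕ) → List (Word S (n + 1)),
    Θ m = θ ∧ (∀ n, IsPath F (n + 1) (Θ n)) ∧
    (∀ (k n : ℕ) (h : k ≤ n), proj (Nat.succ_le_succ h) (Θ n) = Θ k) ∧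
    ∃ C : ℕ, ∀ n, (Θ n).length ≤ C

/-- The fundamental neighbourhood `𝒩(w)`. -/
def nbhd [Nonempty T] (F : System S T) (m : ℕ) (w : Word S (m + 1)) :
    Set (Word S (m + 1)) :=
  {v | ∃ θ, IsIntersectionPath F m θ ∧ θ.head? = some w ∧ θ.getLast? = some v}

/-- Bounded geometry: the diameters of fundamental neighbourhoods are uniformly bounded. -/
def BoundedGeometry [Nonempty T] (F : System S T) : Prop :=
  ∃ D : ℕ, ∀ (m : ℕ) (w : Word S (m + 1)), ∀ v₁ ∈ nbhd F m w, ∀ v₂ ∈ nbhd F m w,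
    (replGraph F (m + 1)).dist v₁ v₂ ≤ D

/-- `|w ∧ v| < L` for words of length `L`: the words differ at some index below the last. -/
def ncRel {L : ℕ} (w v : Word S L) : Prop := ∃ j : Fin L, (j : ℕ) + 1 < L ∧ w j ≠ v j

/-- A non-collapsing path: consecutive vertices satisfy `|w ∧ v| < L`. -/
def NonCollapsing {L : ℕ} (θ : List (Word S L)) : Prop := θ.Chain' ncRel

/-- A mapping between iterated graph systems. -/
structure Hom {S T S' T' : Type} (F : System S T) (F' : System S' T') where
  toFun : S → S'
  map_edge : ∀ x y, (F.E x y ∨ F.E y x) →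
    (toFun x = toFun y ∨ F'.E (toFun x) (toFun y) ∨ F'.E (toFun y) (toFun x))
  glue_collapse : ∀ w1 v1, F.E w1 v1 → toFun w1 = toFun v1 →
    ∀ w2 v2, F.glue (F.typ w1 v1) w2 v2 → toFun w2 = toFun v2
  glue_fwd : ∀ w1 v1, F.E w1 v1 → F'.E (toFun w1) (toFun v1) →
    ∀ w2 v2, F.glue (F.typ w1 v1) w2 v2 →
      F'.glue (F'.typ (toFun w1) (toFun v1)) (toFun w2) (toFun v2)
  glue_rev : ∀ w1 v1, F.E w1 v1 → F'.E (toFun v1) (toFun w1) →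
    ∀ w2 v2, F.glue (F.typ w1 v1) w2 v2 →
      F'.glue (F'.typ (toFun v1) (toFun w1)) (toFun v2) (toFun w2)

/-- An isomorphism between iterated graph systems: a pair of mutually inverse mappings. -/
structure Iso {S T S' T' : Type} (F : System S T) (F' : System S' T') where
  hom : Hom F F'
  inv : Hom F' F
  left_inv : ∀ x, inv.toFun (hom.toFun x) = x
  right_inv : ∀ y, hom.toFun (inv.toFun y) = y

/-- A flipping symmetry of type `t`. -/
def IsFlip (F : System S T) (t : T) (η : Iso F F) : Prop :=
  (∀ w ∈ Iplus F t, F.glue t w (η.hom.toFun w)) ∧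
  (∀ v ∈ Iminus F t, F.glue t (η.hom.toFun v) v)

/-- The data of a reflection symmetry of an iterated graph system: an involutive
isomorphism together with the partition `S = C ∪ D ∪ Δ` satisfying (D1)-(D4). -/
structure ReflData (F : System S T) where
  iso : Iso F F
  C : Set S
  D : Set S
  invol : ∀ x, iso.hom.toFun (iso.hom.toFun x) = x
  C_not_fixed : ∀ x ∈ C, iso.hom.toFun x ≠ x
  D_not_fixed : ∀ x ∈ D, iso.hom.toFun x ≠ x
  CD_disjoint : ∀ x, ¬ (x ∈ C ∧ x ∈ D)
  cover : ∀ x, x ∈ C ∨ x ∈ D ∨ iso.hom.toFun x = x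
  image_C : iso.hom.toFun '' C = D
  edge_CD : ∀ x ∈ C, ∀ y ∈ D, (F.E x y ∨ F.E y x) → iso.hom.toFun x = y
  D2 : ∀ w1 v1, F.E w1 v1 → iso.hom.toFun v1 = v1 →
    (w1 ∈ C → Iminus F (F.typ w1 v1) ⊆ C ∪ {x | iso.hom.toFun x = x}) ∧
    (w1 ∈ D → Iminus F (F.typ w1 v1) ⊆ D ∪ {x | iso.hom.toFun x = x})
  D3 : ∀ w1 v1, F.E w1 v1 → iso.hom.toFun w1 = w1 →
    (v1 ∈ C → Iplus F (F.typ w1 v1) ⊆ C ∪ {x | iso.hom.toFun x = x}) ∧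
    (v1 ∈ D → Iplus F (F.typ w1 v1) ⊆ D ∪ {x | iso.hom.toFun x = x})
  D4 : ∀ w1 v1, F.E w1 v1 → iso.hom.toFun w1 = w1 → iso.hom.toFun v1 = v1 →
    ∀ w2 v2, F.glue (F.typ w1 v1) w2 v2 →
      (w2 ∈ C ∧ v2 ∈ C) ∨ (w2 ∈ D ∧ v2 ∈ D) ∨
      (iso.hom.toFun w2 = w2 ∧ iso.hom.toFun v2 = v2)

/-- (D5): a reflection symmetry. -/
def IsRefl {F : System S T} (R : ReflData F) : Prop :=
  ∀ w1 v1, F.E w1 v1 → w1 ∈ R.C → v1 ∈ R.D →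
    ∀ w2 v2, F.glue (F.typ w1 v1) w2 v2 → R.iso.hom.toFun w2 = v2

/-- (D5*): a separative reflection symmetry. -/
def IsSepRefl {F : System S T} (R : ReflData F) : Prop :=
  ∀ x ∈ R.C, ∀ y ∈ R.D, ¬ (F.E x y ∨ F.E y x)

/-- The coordinatewise action of a reflection symmetry on words. -/
def wordMap {F : System S T} (R : ReflData F) {m : ℕ} (w : Word S m) : Word S m :=
  fun i => R.iso.hom.toFun (w i)

/-- The lifted set `C_α^{(m)}`: words whose first non-fixed coordinate lies in `C`. -/
def liftC {F : System S T} (R : ReflData F) (m : ℕ) : Set (Word S m) :=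
  {w | ∃ k : Fin m, w k ∈ R.C ∧ ∀ j < k, R.iso.hom.toFun (w j) = w j}

/-- The lifted set `D_α^{(m)}`: words whose first non-fixed coordinate lies in `D`. -/
def liftD {F : System S T} (R : ReflData F) (m : ℕ) : Set (Word S m) :=
  {w | ∃ k : Fin m, w k ∈ R.D ∧ ∀ j < k, R.iso.hom.toFun (w j) = w j}

end IGSP
namespace IGSP

variable {S T : Type}

/-- An antisymmetric function supported on the edges of a graph. -/
def Antisym {V : Type} (G : SimpleGraph V) (Φ : V → V → ℝ) : Prop :=
  (∀ x y, Φ x y = - Φ y x) ∧ ∀ x y, ¬ G.Adj x y → Φ x y = 0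

/-- The divergence of `Φ` at a vertex. -/
noncomputable def fdiv {V : Type} (Φ : V → V → ℝ) (x : V) : ℝ := ∑ᶠ y, Φ x y

/-- A flow from `A` to `B`. -/
def IsFlow {V : Type} (G : SimpleGraph V) (A B : Set V) (Φ : V → V → ℝ) : Prop :=
  Antisym G Φ ∧ ∀ x, x ∉ A ∪ B → fdiv Φ x = 0

/-- The total flow `I(Φ) = Σ_{x ∈ A} div Φ (x)`. -/
noncomputable def totalFlow {V : Type} (A : Set V) (Φ : V → V → ℝ) : ℝ :=
  ∑ᶠ x ∈ A, fdiv Φ x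

/-- The `q`-energy `E_q(Φ) = Σ_{{x,y} ∈ E} |Φ(x,y)|^q` (each unordered edge counted once). -/
noncomputable def energy {V : Type} (q : ℝ) (Φ : V → V → ℝ) : ℝ :=
  (∑ᶠ x, ∑ᶠ y, |Φ x y| ^ q) / 2

/-- The degree of a vertex of a graph. -/
noncomputable def degOf {V : Type} (G : SimpleGraph V) (x : V) : ℕ := {y | G.Adj x y}.ncard

/-- The maximal degree of a finite graph. -/
noncomputable def maxDeg {V : Type} [Fintype V] (G : SimpleGraph V) : ℕ :=
  Finset.univ.sup fun x => degOf G x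

/-- The diameter of a finite graph (in the shortest-path metric). -/
noncomputable def gdiam {V : Type} [Fintype V] (G : SimpleGraph V) : ℕ :=
  Finset.univ.sup fun pr : V × V => G.dist pr.1 pr.2

/-- The set of vertices of a path. -/
def pathVerts {V : Type} (θ : List V) : Set V := {x | x ∈ θ}

/-- A density is admissible for a path family if it is nonnegative and its sum along
every path of the family is at least 1. -/
def Admissible {V : Type} (Θ : Set (List V)) (ρ : V → ℝ) : Prop :=
  (∀ x, 0 ≤ ρ x) ∧ ∀ θ ∈ Θ, 1 ≤ ∑ᶠ x ∈ pathVerts θ, ρ x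

/-- The discrete (vertex) `p`-modulus of a family of paths. -/
noncomputable def modulus {V : Type} (p : ℝ) (Θ : Set (List V)) : ℝ :=
  sInf {M | ∃ ρ : V → ℝ, Admissible Θ ρ ∧ M = ∑ᶠ x, ρ x ^ p}

/-- The `p`-resistance `E_q(A,B,G)`: infimal `q`-energy of unit flows from `A` to `B`. -/
noncomputable def resistance {V : Type} (q : ℝ) (G : SimpleGraph V) (A B : Set V) : ℝ :=
  sInf {e | ∃ Φ, IsFlow G A B Φ ∧ totalFlow A Φ = 1 ∧ e = energy q Φ}

/-- The family `Θ_𝔞^{(m)}` of paths in `G_m` from `I_{t₁,★₁}^{(m)}` to `I_{t₂,★₂}^{(m)}`. -/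
def ThetaIGS [Nonempty T] (F : System S T) (m : ℕ) (t₁ : T) (b₁ : Bool) (t₂ : T)
    (b₂ : Bool) : Set (List (Word S m)) :=
  {θ | IsPath F m θ ∧ (∃ w ∈ IsetW F t₁ b₁ m, θ.head? = some w) ∧
    ∃ v ∈ IsetW F t₂ b₂ m, θ.getLast? = some v}

/-- `ℒ^{(m)}`, the collection of sets `I_{t,★}^{(m)}`. -/
def scriptL [Nonempty T] (F : System S T) (m : ℕ) : Set (Set (Word S m)) :=
  {A | ∃ (t : T) (b : Bool), A = IsetW F t b m}

/-- The added vertices `v_L` (for `L ∈ ℒ^{(m)}` and `v ∈ L`) of the graph `G̃_m`. -/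
def AddedV [Nonempty T] (F : System S T) (m : ℕ) :=
  {pr : Set (Word S m) × Word S m // pr.1 ∈ scriptL F m ∧ pr.2 ∈ pr.1}

/-- The vertex set of the graph `G̃_m`. -/
def TildeV [Nonempty T] (F : System S T) (m : ℕ) := Word S m ⊕ AddedV F m

/-- The graph `G̃_m`, obtained from `G_m` by attaching a pendant vertex `v_L` at every
`v ∈ L` for every `L ∈ ℒ^{(m)}`. -/
noncomputable def tildeG [Nonempty T] (F : System S T) (m : ℕ) : SimpleGraph (TildeV F m) where
  Adj x y :=
    match x, y with
    | Sum.inl w, Sum.inl v => w ≠ v ∧ adjW F m w v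
    | Sum.inl w, Sum.inr pr => pr.1.2 = w
    | Sum.inr pr, Sum.inl w => pr.1.2 = w
    | Sum.inr _, Sum.inr _ => False
  symm := by
    constructor
    rintro (w | pr) (v | qr) h
    · exact ⟨Ne.symm h.1, Or.symm h.2⟩
    · exact h
    · exact h
    · exact h.elim
  loopless := by
    constructor
    rintro (w | pr) h
    · exact h.1 rfl
    · exact h

/-- The set `L̃ = {v_L : v ∈ L}` of added vertices over `L`. -/
def tildeSet [Nonempty T] (F : System S T) (m : ℕ) (L : Set (Word S m)) :
    Set (TildeV F m) :=
  {x | ∃ pr : AddedV F m, pr.1.1 = L ∧ x = Sum.inr pr}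

/-- A flow basis on `G̃_m`: a family of unit flows between the added vertex sets of all
pairs of distinct members of `ℒ^{(m)}`, satisfying (FB1)–(FB4). -/
structure FlowBasis [Nonempty T] (F : System S T) (ηfam : T → Iso F F) (m : ℕ) where
  flow : (L₁ L₂ : Set (Word S m)) → L₁ ∈ scriptL F m → L₂ ∈ scriptL F m → L₁ ≠ L₂ →
    TildeV F m → TildeV F m → ℝ
  flow_isFlow : ∀ (L₁ L₂ : Set (Word S m)) (h₁ : L₁ ∈ scriptL F m) (h₂ : L₂ ∈ scriptL F m)
    (hne : L₁ ≠ L₂),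
    IsFlow (tildeG F m) (tildeSet F m L₁) (tildeSet F m L₂) (flow L₁ L₂ h₁ h₂ hne)
  flow_unit : ∀ (L₁ L₂ : Set (Word S m)) (h₁ : L₁ ∈ scriptL F m) (h₂ : L₂ ∈ scriptL F m)
    (hne : L₁ ≠ L₂), totalFlow (tildeSet F m L₁) (flow L₁ L₂ h₁ h₂ hne) = 1
  fb2 : ∀ (L₁ L₂ : Set (Word S m)) (h₁ : L₁ ∈ scriptL F m) (h₂ : L₂ ∈ scriptL F m)
    (hne : L₁ ≠ L₂) (pr : AddedV F m), pr.1.1 ≠ L₁ → pr.1.1 ≠ L₂ →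
    flow L₁ L₂ h₁ h₂ hne (Sum.inr pr) (Sum.inl pr.1.2) = 0
  fb3_out : ∀ (L L₁ L₂ : Set (Word S m)) (hL : L ∈ scriptL F m) (h₁ : L₁ ∈ scriptL F m)
    (h₂ : L₂ ∈ scriptL F m) (hne₁ : L ≠ L₁) (hne₂ : L ≠ L₂) (pr : AddedV F m),
    pr.1.1 = L →
    flow L L₁ hL h₁ hne₁ (Sum.inr pr) (Sum.inl pr.1.2) =
      flow L L₂ hL h₂ hne₂ (Sum.inr pr) (Sum.inl pr.1.2)
  fb3_in : ∀ (L L₁ L₂ : Set (Word S m)) (hL : L ∈ scriptL F m) (h₁ : L₁ ∈ scriptL F m)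
    (h₂ : L₂ ∈ scriptL F m) (hne₁ : L₁ ≠ L) (hne₂ : L₂ ≠ L) (pr : AddedV F m),
    pr.1.1 = L →
    flow L₁ L h₁ hL hne₁ (Sum.inl pr.1.2) (Sum.inr pr) =
      flow L₂ L h₂ hL hne₂ (Sum.inl pr.1.2) (Sum.inr pr)
  fb4_flip : ∀ (t : T) (b : Bool) (h₁ : IsetW F t b m ∈ scriptL F m)
    (h₂ : IsetW F t (!b) m ∈ scriptL F m) (hne : IsetW F t b m ≠ IsetW F t (!b) m)
    (pr qr : AddedV F m), pr.1.1 = IsetW F t b m → qr.1.1 = IsetW F t (!b) m →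
    qr.1.2 = (fun i => (ηfam t).hom.toFun (pr.1.2 i)) →
    flow (IsetW F t b m) (IsetW F t (!b) m) h₁ h₂ hne (Sum.inr pr) (Sum.inl pr.1.2) =
      flow (IsetW F t b m) (IsetW F t (!b) m) h₁ h₂ hne (Sum.inl qr.1.2) (Sum.inr qr)
  fb4_sym : ∀ (t : T) (b : Bool) (h₁ : IsetW F t b m ∈ scriptL F m)
    (h₂ : IsetW F t (!b) m ∈ scriptL F m) (hne : IsetW F t b m ≠ IsetW F t (!b) m)
    (hne' : IsetW F t (!b) m ≠ IsetW F t b m) (pr : AddedV F m),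
    pr.1.1 = IsetW F t b m →
    flow (IsetW F t b m) (IsetW F t (!b) m) h₁ h₂ hne (Sum.inr pr) (Sum.inl pr.1.2) =
      flow (IsetW F t (!b) m) (IsetW F t b m) h₂ h₁ hne' (Sum.inl pr.1.2) (Sum.inr pr)

/-- The `q`-energy of a flow basis: the maximal energy of its members. -/
noncomputable def basisEnergy [Nonempty T] {F : System S T} {ηfam : T → Iso F F} {m : ℕ}
    (q : ℝ) (FB : FlowBasis F ηfam m) : ℝ :=
  sSup {e | ∃ (L₁ L₂ : Set (Word S m)) (h₁ : L₁ ∈ scriptL F m) (h₂ : L₂ ∈ scriptL F m)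
    (hne : L₁ ≠ L₂), e = energy q (FB.flow L₁ L₂ h₁ h₂ hne)}

open Classical in
/-- The twisted flow `T_α(F)` of Proposition "Twist flow". -/
noncomputable def Talpha [Nonempty T] {F : System S T} {m : ℕ} (R : ReflData F)
    (L₁ L₂' : Set (Word S m)) (A : TildeV F m ≃ TildeV F m)
    (Φ : TildeV F m → TildeV F m → ℝ) : TildeV F m → TildeV F m → ℝ := fun x y =>
  if (∃ w, x = Sum.inl w ∧ wordMap R w = w) ∧ (∃ w, y = Sum.inl w ∧ wordMap R w = w) then
    Φ x y
  else if ((∃ w, x = Sum.inl w ∧ w ∈ liftC R m) ∨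
        (∃ pr : AddedV F m, x = Sum.inr pr ∧ (pr.1.1 = L₁ ∨ pr.1.1 = L₂'))) ∨
      ((∃ w, y = Sum.inl w ∧ w ∈ liftC R m) ∨
        (∃ pr : AddedV F m, y = Sum.inr pr ∧ (pr.1.1 = L₁ ∨ pr.1.1 = L₂'))) then
    Φ x y + Φ (A.symm x) (A.symm y)
  else 0

end IGSP
namespace IGSP

/-- The symbol set of the ambient cubical system: `{1,…,L}^d × {1,…,s}` (0-indexed). -/
abbrev CSym (d L s : ℕ) := (Fin d → Fin L) × Fin s

/-- The ambient edge relation of type `t_j`. -/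
def ambE {d L s : ℕ} (j : Fin d) (w v : CSym d L s) : Prop :=
  (∀ i, i ≠ j → w.1 i = v.1 i) ∧ (v.1 j : ℕ) = (w.1 j : ℕ) + 1

/-- The ambient gluing rule of type `t_j`. -/
def ambI {d L s : ℕ} (j : Fin d) (w v : CSym d L s) : Prop :=
  (∀ i, i ≠ j → w.1 i = v.1 i) ∧ (w.1 j : ℕ) = L - 1 ∧ (v.1 j : ℕ) = 0 ∧ w.2 = v.2

/-- A symbol lying on the `j`-axis edge of the cube: all other coordinates extremal
and label `1`. -/
def onAxis {d L s : ℕ} (j : Fin d) (w : CSym d L s) : Prop :=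
  (∀ i, i ≠ j → ((w.1 i : ℕ) = 0 ∨ (w.1 i : ℕ) = L - 1)) ∧ (w.2 : ℕ) = 0

/-- The coordinate reflection `η_j : c_j ↦ L + 1 - c_j`. -/
def etaMap {d L s : ℕ} (j : Fin d) (w : CSym d L s) : CSym d L s :=
  ⟨fun i => if i = j then ⟨L - 1 - (w.1 j : ℕ), by have := (w.1 j).isLt; omega⟩ else w.1 i,
    w.2⟩

/-- The diagonal reflection `α_{j,k}^+` exchanging coordinates `j` and `k`. -/
def swapMap {d L s : ℕ} (j k : Fin d) (w : CSym d L s) : CSym d L s :=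
  ⟨fun i => if i = j then w.1 k else if i = k then w.1 j else w.1 i, w.2⟩

/-- The anti-diagonal reflection `α_{j,k}^-`. -/
def aswapMap {d L s : ℕ} (j k : Fin d) (w : CSym d L s) : CSym d L s :=
  ⟨fun i =>
    if i = j then ⟨L - 1 - (w.1 k : ℕ), by have := (w.1 k).isLt; omega⟩
    else if i = k then ⟨L - 1 - (w.1 j : ℕ), by have := (w.1 j).isLt; omega⟩
    else w.1 i, w.2⟩

/-- A cubical iterated graph system: a sub-system of the ambient system `𝔉(d,L,s)`
satisfying the conditions (C1)–(C4). -/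
structure CubicalIGS (d L s : ℕ) where
  hd : 1 ≤ d
  hL : 3 ≤ L
  hs : 1 ≤ s
  Symb : Set (CSym d L s)
  sys : System (↥Symb) (Fin d)
  edge_amb : ∀ x y : ↥Symb, sys.E x y → ambE (sys.typ x y) x.1 y.1
  glue_amb : ∀ (j : Fin d) (x y : ↥Symb), sys.glue j x y → ambI j x.1 y.1
  C1 : ∀ w : CSym d L s, (∃ j, onAxis j w) → w ∈ Symb
  C2 : ∀ (j : Fin d) (x y : ↥Symb), onAxis j x.1 → onAxis j y.1 → ambE j x.1 y.1 →
    sys.E x y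
  C3 : ∀ (j : Fin d) (x y : ↥Symb), onAxis j x.1 → onAxis j y.1 → ambI j x.1 y.1 →
    sys.glue j x y
  C4_eta : ∀ j : Fin d, ∃ ψ : Iso sys sys,
    ∀ x : ↥Symb, (ψ.hom.toFun x : CSym d L s) = etaMap j x.1
  C4_plus : ∀ j k : Fin d, j ≠ k → ∃ ψ : Iso sys sys,
    ∀ x : ↥Symb, (ψ.hom.toFun x : CSym d L s) = swapMap j k x.1
  C4_minus : ∀ j k : Fin d, j ≠ k → ∃ ψ : Iso sys sys,
    ∀ x : ↥Symb, (ψ.hom.toFun x : CSym d L s) = aswapMap j k x.1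

/-- The corner symbol `𝐤`: first coordinate `k`, all other coordinates `1`, label `1`. -/
def cornerSym {d L s : ℕ} (cub : CubicalIGS d L s) (k : Fin L) : ↥cub.Symb :=
  ⟨⟨fun i => if (i : ℕ) = 0 then k else ⟨0, by have := k.isLt; omega⟩,
      ⟨0, by have := cub.hs; omega⟩⟩, by
    apply cub.C1
    refine ⟨⟨0, cub.hd⟩, fun i hi => ?_, rfl⟩
    have hiv : (i : ℕ) ≠ 0 := fun h => hi (Fin.ext h)
    left
    simp [hiv]⟩

end IGSP
namespace IGSP

/-- The edge relation of the Sierpiński gasket IGS. -/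
abbrev gasketE (x y : Fin 3) : Prop :=
  (x = 0 ∧ y = 1) ∨ (x = 1 ∧ y = 2) ∨ (x = 0 ∧ y = 2)

/-- The Sierpiński gasket iterated graph system. -/
noncomputable def gasket : System (Fin 3) (Fin 3) where
  E := gasketE
  not_both := by decide
  irrefl := by decide
  conn := by
    have hadj : ∀ a b : Fin 3, a ≠ b → gasketE a b ∨ gasketE b a := by decide
    intro x y
    rcases eq_or_ne x y with rfl | h
    · exact Relation.ReflTransGen.refl
    · exact Relation.ReflTransGen.single (hadj x y h)
  typ := fun x y => if x = 0 ∧ y = 1 then 0 else if x = 1 ∧ y = 2 then 1 else 2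
  typ_surj := by decide
  glue := fun t x y =>
    (t = 0 ∧ x = 1 ∧ y = 0) ∨ (t = 1 ∧ x = 2 ∧ y = 1) ∨ (t = 2 ∧ x = 2 ∧ y = 0)
  glue_nonempty := by decide

open Fin.NatCast in
/-- The pentagonal Sierpiński carpet iterated graph system. -/
noncomputable def pentagon : System (Fin 5) (Fin 5) where
  E := fun x y => y = x + 1
  not_both := by decide
  irrefl := by decide
  conn := by
    intro x y
    have key : ∀ (k : ℕ) (z : Fin 5),
        Relation.ReflTransGen (fun a b : Fin 5 => b = a + 1 ∨ a = b + 1) z (z + (k : Fin 5)) := by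
      intro k
      induction k with
      | zero => intro z; simpa using Relation.ReflTransGen.refl
      | succ n ih =>
          intro z
          have h : ((n + 1 : ℕ) : Fin 5) = ((n : ℕ) : Fin 5) + 1 := by push_cast; ring
          rw [h, ← add_assoc]
          exact (ih z).tail (Or.inl rfl)
    have h2 := key ((y - x : Fin 5) : ℕ) x
    rw [Fin.cast_val_eq_self] at h2
    have h3 : x + (y - x) = y := by abel
    rwa [h3] at h2
  typ := fun x _ => x
  typ_surj := fun t => ⟨t, t + 1, rfl, rfl⟩
  glue := fun t x y => (x = t + 1 ∧ y = t) ∨ (x = t + 2 ∧ y = t + 4)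
  glue_nonempty := fun t => ⟨t + 1, t, Or.inl ⟨rfl, rfl⟩⟩

/-- The interval iterated graph system `𝔉(1, L)`. -/
noncomputable def intervalSys (L : ℕ) (hL : 3 ≤ L) : System (Fin L) Unit where
  E x y := (y : ℕ) = (x : ℕ) + 1
  not_both := by intro x y h h'; omega
  irrefl := by intro x h; omega
  conn := by
    have key : ∀ (k : ℕ) (hk : k < L),
        Relation.ReflTransGen (fun a b : Fin L => ((b : ℕ) = (a : ℕ) + 1) ∨ ((a : ℕ) = (b : ℕ) + 1))
          ⟨0, by omega⟩ ⟨k, hk⟩ := by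
      intro k
      induction k with
      | zero => intro hk; exact Relation.ReflTransGen.refl
      | succ n ih =>
          intro hk
          exact Relation.ReflTransGen.tail (ih (by omega)) (Or.inl rfl)
    intro x y
    have hsymm : Symmetric fun a b : Fin L => ((b : ℕ) = (a : ℕ) + 1) ∨ ((a : ℕ) = (b : ℕ) + 1) :=
      fun a b h => h.symm
    have hx := key x.val x.isLt
    have hy := key y.val y.isLt
    simp only [Fin.eta] at hx hy
    haveI : Std.Symm fun a b : Fin L => ((b : ℕ) = (a : ℕ) + 1) ∨ ((a : ℕ) = (b : ℕ) + 1) :=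
      ⟨fun a b h => hsymm h⟩
    exact Relation.ReflTransGen.trans (Std.Symm.symm _ _ hx) hy
  typ := fun _ _ => ()
  typ_surj := by
    intro t
    refine ⟨⟨0, by omega⟩, ⟨1, by omega⟩, rfl, ?_⟩
    cases t; rfl
  glue := fun _ x y => (x : ℕ) = L - 1 ∧ (y : ℕ) = 0
  glue_nonempty := fun _ => ⟨⟨L - 1, by omega⟩, ⟨0, by omega⟩, rfl, rfl⟩

variable {S T : Type}

/-- A folding of `G_{k+n}` onto `w̃ · W_n`: a graph mapping into the induced subgraph on
`w̃ · W_n` which fixes `w̃ · W_n` pointwise. -/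
def HasFolding [Nonempty T] (F : System S T) (k n : ℕ) (wt : Word S k) : Prop :=
  ∃ f : Word S (k + n) → Word S (k + n),
    (∀ x, ∃ u : Word S n, f x = Fin.append wt u) ∧
    (∀ u : Word S n, f (Fin.append wt u) = Fin.append wt u) ∧
    (∀ x y, adjW F (k + n) x y → f x = f y ∨ adjW F (k + n) (f x) (f y))

end IGSP

namespace IGSP

section Statement8Aux

variable {S T : Type} [Nonempty T] (F : System S T)

lemma edge_irrefl : ∀ (L : ℕ) (w : Word S L), ¬ edge F L w w := by
  intro L
  induction L using Nat.strong_induction_on with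
  | _ L ih =>
    match L with
    | 0 => intro w h; exact h
    | 1 => intro w h; exact F.irrefl _ h
    | (L + 2) =>
      intro w h
      rcases h with ⟨_, h⟩ | ⟨h, _⟩
      · exact F.irrefl _ h
      · exact ih (L + 1) (by omega) _ h

lemma edge_antisymm : ∀ (L : ℕ) (w v : Word S L), edge F L w v → ¬ edge F L v w := by
  intro L
  induction L using Nat.strong_induction_on with
  | _ L ih =>
    match L with
    | 0 => intro w v h; exact h.elim
    | 1 => intro w v h h'; exact F.not_both _ _ h h'
    | (L + 2) =>
      intro w v h h'
      rcases h with ⟨he, h⟩ | ⟨h, _⟩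
      · rcases h' with ⟨_, h'⟩ | ⟨h', _⟩
        · exact F.not_both _ _ h h'
        · rw [he] at h'
          exact edge_irrefl F (L + 1) _ h'
      · rcases h' with ⟨he', _⟩ | ⟨h', _⟩
        · rw [he'] at h
          exact edge_irrefl F (L + 1) _ h
        · exact ih (L + 1) (by omega) _ _ h h'

lemma adjW_ne {L : ℕ} {w v : Word S L} (h : adjW F L w v) : w ≠ v := by
  rintro rfl
  rcases h with h | h <;> exact edge_irrefl F L w h

lemma edge_succ_cases {L : ℕ} {x y : Word S (L + 2)} (h : edge F (L + 2) x y)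
    (hne : Fin.init x ≠ Fin.init y) :
    edge F (L + 1) (Fin.init x) (Fin.init y) ∧
      F.glue (etyp F (L + 1) (Fin.init x) (Fin.init y))
        (x (Fin.last (L + 1))) (y (Fin.last (L + 1))) := by
  rcases h with ⟨he, _⟩ | h
  · exact absurd he hne
  · exact h

lemma adj_init {L : ℕ} (hL : 1 ≤ L) {x y : Word S (L + 1)}
    (hne : Fin.init x ≠ Fin.init y) (h : adjW F (L + 1) x y) :
    adjW F L (Fin.init x) (Fin.init y) := by
  obtain ⟨L, rfl⟩ : ∃ L', L = L' + 1 := ⟨L - 1, by omega⟩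
  rcases h with h | h
  · exact Or.inl (edge_succ_cases F h hne).1
  · exact Or.inr (edge_succ_cases F h (Ne.symm hne)).1

lemma last_unique (hGR : GR F) {L : ℕ} (hL : 1 ≤ L) {x y y' : Word S (L + 1)}
    (hne : Fin.init x ≠ Fin.init y) (hyy : Fin.init y = Fin.init y')
    (h1 : adjW F (L + 1) x y) (h2 : adjW F (L + 1) x y') :
    y (Fin.last L) = y' (Fin.last L) := by
  obtain ⟨L, rfl⟩ : ∃ L', L = L' + 1 := ⟨L - 1, by omega⟩
  have hne' : Fin.init x ≠ Fin.init y' := hyy ▸ hne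
  rcases h1 with h1 | h1
  · obtain ⟨e1, g1⟩ := edge_succ_cases F h1 hne
    rcases h2 with h2 | h2
    · obtain ⟨e2, g2⟩ := edge_succ_cases F h2 hne'
      rw [← hyy] at g2
      exact (hGR.1 _ _).1 g1 g2
    · obtain ⟨e2, g2⟩ := edge_succ_cases F h2 (Ne.symm hne')
      rw [← hyy] at e2
      exact absurd e2 (edge_antisymm F _ _ _ e1)
  · obtain ⟨e1, g1⟩ := edge_succ_cases F h1 (Ne.symm hne)
    rcases h2 with h2 | h2
    · obtain ⟨e2, g2⟩ := edge_succ_cases F h2 hne'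
      rw [← hyy] at e2
      exact absurd e1 (edge_antisymm F _ _ _ e2)
    · obtain ⟨e2, g2⟩ := edge_succ_cases F h2 (Ne.symm hne')
      rw [← hyy] at g2 e2
      exact (hGR.1 _ _).2 g1 g2

lemma append_ne {K m : ℕ} {w w' : Word S K} (hne : w ≠ w') (a : Word S m) (b : Word S m) :
    Fin.append w a ≠ Fin.append w' b := by
  intro h
  apply hne
  funext i
  have := congrFun h (Fin.castAdd m i)
  simpa [Fin.append_left] using this

lemma suffix_unique (hGR : GR F) :
    ∀ (m K : ℕ) (w w' : Word S (K + 1)) (v v₂ v₂' : Word S m),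
      w ≠ w' →
      adjW F (K + 1 + m) (Fin.append w v) (Fin.append w' v₂) →
      adjW F (K + 1 + m) (Fin.append w v) (Fin.append w' v₂') → v₂ = v₂' := by
  intro m
  induction m with
  | zero =>
    intro K w w' v v₂ v₂' _ _ _
    funext i; exact i.elim0
  | succ m ih =>
    intro K w w' v v₂ v₂' hne h1 h2
    have hsn : ∀ z : Word S (m + 1),
        Fin.append w' z = Fin.snoc (Fin.append w' (Fin.init z)) (z (Fin.last m)) := by
      intro z
      conv_lhs => rw [← Fin.snoc_init_self z]
      exact Fin.append_snoc _ _ _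
    have hsnw : Fin.append w v
        = Fin.snoc (Fin.append w (Fin.init v)) (v (Fin.last m)) := by
      conv_lhs => rw [← Fin.snoc_init_self v]
      exact Fin.append_snoc _ _ _
    have hinitx : Fin.init (Fin.append (n := m + 1) w v) = Fin.append w (Fin.init v) := by
      rw [hsnw, Fin.init_snoc]
    have hinity : Fin.init (Fin.append (n := m + 1) w' v₂) = Fin.append w' (Fin.init v₂) := by
      rw [hsn v₂, Fin.init_snoc]
    have hinity' : Fin.init (Fin.append (n := m + 1) w' v₂') = Fin.append w' (Fin.init v₂') := by
      rw [hsn v₂', Fin.init_snoc]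
    have hnein : Fin.init (Fin.append (n := m + 1) w v) ≠ Fin.init (Fin.append (n := m + 1) w' v₂) := by
      rw [hinitx, hinity]; exact append_ne hne _ _
    have hnein' : Fin.init (Fin.append (n := m + 1) w v) ≠ Fin.init (Fin.append (n := m + 1) w' v₂') := by
      rw [hinitx, hinity']; exact append_ne hne _ _
    have hLpos : 1 ≤ K + 1 + m := by omega
    have ha1 : adjW F (K + 1 + m) (Fin.append w (Fin.init v)) (Fin.append w' (Fin.init v₂)) := by
      rw [← hinitx, ← hinity]; exact adj_init F hLpos hnein h1
    have ha2 : adjW F (K + 1 + m) (Fin.append w (Fin.init v)) (Fin.append w' (Fin.init v₂')) := by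
      rw [← hinitx, ← hinity']; exact adj_init F hLpos hnein' h2
    have hin : Fin.init v₂ = Fin.init v₂' := ih K w w' (Fin.init v) _ _ hne ha1 ha2
    have hyy : Fin.init (Fin.append (n := m + 1) w' v₂) = Fin.init (Fin.append (n := m + 1) w' v₂') := by
      rw [hinity, hinity', hin]
    have hlasteq := last_unique F hGR hLpos hnein hyy h1 h2
    have hl2 : (Fin.append (n := m + 1) w' v₂) (Fin.last (K + 1 + m)) = v₂ (Fin.last m) := by
      rw [hsn v₂]; exact Fin.snoc_last _ _
    have hl2' : (Fin.append (n := m + 1) w' v₂') (Fin.last (K + 1 + m)) = v₂' (Fin.last m) := by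
      rw [hsn v₂']; exact Fin.snoc_last _ _
    have hlast : v₂ (Fin.last m) = v₂' (Fin.last m) := by
      rw [← hl2, ← hl2', hlasteq]
    rw [← Fin.snoc_init_self v₂, ← Fin.snoc_init_self v₂', hin, hlast]

lemma lift_unique (hGR : GR F) (n m : ℕ) :
    ∀ (θ : List (Word S n)) (vs vs' : List (Word S m)),
      vs.length = θ.length → vs'.length = θ.length → vs.head? = vs'.head? →
      θ.Chain' (adjW F n) →
      (List.zipWith Fin.append θ vs).Chain' (adjW F (n + m)) →
      (List.zipWith Fin.append θ vs').Chain' (adjW F (n + m)) → vs = vs' := by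
  intro θ
  induction θ with
  | nil =>
    intro vs vs' hlen hlen' _ _ _ _
    rw [List.length_nil] at hlen hlen'
    rw [List.length_eq_zero_iff.mp hlen, List.length_eq_zero_iff.mp hlen']
  | cons w θ ih =>
    intro vs vs' hlen hlen' hhead hθc hc hc'
    match vs, vs' with
    | v :: vs, v' :: vs' =>
      have hv : v = v' := by simpa using hhead
      subst hv
      cases θ with
      | nil =>
        have h1 : vs = [] := List.length_eq_zero_iff.mp (by simpa using hlen)
        have h2 : vs' = [] := List.length_eq_zero_iff.mp (by simpa using hlen')
        rw [h1, h2]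
      | cons w₂ θ =>
        match vs, vs' with
        | v₂ :: vs, v₂' :: vs' =>
          have hadj : adjW F n w w₂ := (List.isChain_cons_cons.mp hθc).1
          have hwne : w ≠ w₂ := adjW_ne F hadj
          obtain ⟨K, rfl⟩ : ∃ K, n = K + 1 := by
            cases n with
            | zero => exact absurd (funext fun i => i.elim0) hwne
            | succ K => exact ⟨K, rfl⟩
          have hz1 : adjW F (K + 1 + m) (Fin.append w v) (Fin.append w₂ v₂) :=
            (List.isChain_cons_cons.mp hc).1
          have hz2 : adjW F (K + 1 + m) (Fin.append w v) (Fin.append w₂ v₂') :=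
            (List.isChain_cons_cons.mp hc').1
          have hv2 : v₂ = v₂' := suffix_unique F hGR m K w w₂ v v₂ v₂' hwne hz1 hz2
          subst hv2
          have htail : v₂ :: vs = v₂ :: vs' :=
            ih (v₂ :: vs) (v₂ :: vs') (by simpa using hlen) (by simpa using hlen') rfl
              (List.isChain_cons_cons.mp hθc).2 (List.isChain_cons_cons.mp hc).2
              (List.isChain_cons_cons.mp hc').2
          rw [htail]

end Statement8Aux

/-- Uniqueness of liftings of paths: given a path `θ = [w⁽¹⁾,…,w⁽ˡ⁾]` in
`G_n` and a fixed first suffix `v⁽¹⁾ ∈ W_m`, there is at most one list of suffixes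
`v⁽¹⁾,…,v⁽ˡ⁾` making `[w⁽¹⁾v⁽¹⁾,…,w⁽ˡ⁾v⁽ˡ⁾]` a path in `G_{n+m}`. -/
theorem statement8 {S T : Type} [Nonempty T] (F : System S T) (hGR : GR F)
    (n m : ℕ) (θ : List (Word S n)) (hθ : IsPath F n θ)
    (vs vs' : List (Word S m))
    (hlen : vs.length = θ.length) (hlen' : vs'.length = θ.length)
    (hhead : vs.head? = vs'.head?)
    (hpath : IsPath F (n + m) (List.zipWith Fin.append θ vs))
    (hpath' : IsPath F (n + m) (List.zipWith Fin.append θ vs')) :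
    vs = vs' := by
  exact lift_unique F hGR n m θ vs vs' hlen hlen' hhead hθ.2 hpath.2 hpath'.2

end IGSP
end

section
/- Let 𝔉 be a cubical iterated graph system with parameters (d*,L*,s*), or the Sierpiński gasket IGS, or the pentagonal Sierpiński carpet IGS (in the latter two cases set L* = 2). Then for every type t ∈ 𝒯 and every m ∈ ℕ, d_{G_m}(I_{t,−}^{(m)}, I_{t,+}^{(m)}) ≥ (1/2)·L*^m. -/
namespace IGSP



section AUXPROOF
variable {S T : Type}

section SB
variable [Nonempty T] {F : System S T}

theorem edge_zero (w v : Word S 0) : ¬ edge F 0 w v := fun h => h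

theorem edge_one {w v : Word S 1} : edge F 1 w v ↔ F.E (w 0) (v 0) := Iff.rfl

theorem edge_succ {L : ℕ} {w v : Word S (L + 2)} :
    edge F (L + 2) w v ↔
      ((Fin.init w = Fin.init v ∧ F.E (w (Fin.last (L + 1))) (v (Fin.last (L + 1)))) ∨
        (edge F (L + 1) (Fin.init w) (Fin.init v) ∧
          F.glue (etyp F (L + 1) (Fin.init w) (Fin.init v))
            (w (Fin.last (L + 1))) (v (Fin.last (L + 1))))) := Iff.rfl

theorem etyp_one {w v : Word S 1} : etyp F 1 w v = F.typ (w 0) (v 0) := rfl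

open Classical in
theorem etyp_succ {L : ℕ} (w v : Word S (L + 2)) :
    etyp F (L + 2) w v =
      if Fin.init w = Fin.init v then F.typ (w (Fin.last (L + 1))) (v (Fin.last (L + 1)))
      else etyp F (L + 1) (Fin.init w) (Fin.init v) := rfl

/-- The state of the automaton after reading a word. -/
def stW {Q : Type} (q0 : Q) (tau : Q → S → Q) : (m : ℕ) → Word S m → Q
  | 0, _ => q0
  | m + 1, w => tau (stW q0 tau m (Fin.init w)) (w (Fin.last m))

/-- The automaton potential of a word. -/
def phiW {Q : Type} (q0 : Q) (tau : Q → S → Q) (r : Q → S → ℤ) (l : ℤ) :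
    (m : ℕ) → Word S m → ℤ
  | 0, _ => 0
  | m + 1, w => l * phiW q0 tau r l m (Fin.init w)
      + r (stW q0 tau m (Fin.init w)) (w (Fin.last m))

theorem key {Q : Type} (q0 : Q) (tau : Q → S → Q) (r : Q → S → ℤ) (l : ℤ)
    (Rel : T → Q → Q → ℤ → Prop)
    (H1 : ∀ (q : Q) (a b : S), F.E a b →
      Rel (F.typ a b) (tau q a) (tau q b) (r q b - r q a))
    (H2 : ∀ (t : T) (q q' : Q) (d : ℤ) (x y : S), Rel t q q' d → F.glue t x y →
      Rel t (tau q x) (tau q' y) (l * d + (r q' y - r q x))) :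
    ∀ (m : ℕ) (w v : Word S m), edge F m w v →
      w ≠ v ∧ Rel (etyp F m w v) (stW q0 tau m w) (stW q0 tau m v)
        (phiW q0 tau r l m v - phiW q0 tau r l m w) := by
  intro m
  induction m using Nat.strong_induction_on with
  | _ m IH =>
    match m with
    | 0 => exact fun w v h => absurd h (edge_zero w v)
    | 1 =>
      intro w v h
      have hE : F.E (w 0) (v 0) := edge_one.mp h
      have h0 : (0 : Fin 1) = Fin.last 0 := rfl
      constructor
      · intro hwv
        subst hwv
        exact F.irrefl (w 0) hE
      · have := H1 q0 (w 0) (v 0) hE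
        rw [etyp_one]
        have hst : ∀ u : Word S 1, stW q0 tau 1 u = tau q0 (u 0) := by
          intro u; simp [stW, ← h0]
        have hph : ∀ u : Word S 1, phiW q0 tau r l 1 u = r q0 (u 0) := by
          intro u; simp [phiW, stW, ← h0]
        rw [hst, hst, hph, hph]
        exact this
    | (L + 2) =>
      intro w v h
      rcases edge_succ.mp h with ⟨hinit, hE⟩ | ⟨hedge, hglue⟩
      · constructor
        · intro hwv
          subst hwv
          exact F.irrefl _ hE
        · rw [etyp_succ, if_pos hinit]
          have hst : ∀ u : Word S (L + 2),
              stW q0 tau (L + 2) u = tau (stW q0 tau (L + 1) (Fin.init u)) (u (Fin.last (L + 1))) :=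
            fun u => rfl
          have hph : ∀ u : Word S (L + 2), phiW q0 tau r l (L + 2) u =
              l * phiW q0 tau r l (L + 1) (Fin.init u)
                + r (stW q0 tau (L + 1) (Fin.init u)) (u (Fin.last (L + 1))) := fun u => rfl
          rw [hst, hst, hph, hph, hinit]
          have := H1 (stW q0 tau (L + 1) (Fin.init v)) _ _ hE
          convert this using 1
          ring
      · obtain ⟨hne, hRel⟩ := IH (L + 1) (by omega) _ _ hedge
        constructor
        · intro hwv; exact hne (by rw [hwv])
        · rw [etyp_succ, if_neg hne]
          have := H2 _ _ _ _ _ _ hRel hglue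
          convert this using 1
          show phiW q0 tau r l (L + 2) v - phiW q0 tau r l (L + 2) w = _
          have hph : ∀ u : Word S (L + 2), phiW q0 tau r l (L + 2) u =
              l * phiW q0 tau r l (L + 1) (Fin.init u)
                + r (stW q0 tau (L + 1) (Fin.init u)) (u (Fin.last (L + 1))) := fun u => rfl
          rw [hph, hph]
          ring
          rfl
          rfl

theorem ne_of_E {a b : S} (h : F.E a b) : a ≠ b := by
  intro hab; subst hab; exact F.irrefl a h

theorem sameCell {L : ℕ} (p : Word S (L + 1)) (a b : S) :
    (replGraph F (L + 2)).Reachable (Fin.snoc p a) (Fin.snoc p b) := by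
  have hconn := F.conn a b
  induction hconn with
  | refl => exact SimpleGraph.Reachable.refl _
  | tail _ hcd ih =>
    rename_i c d _
    refine ih.trans (SimpleGraph.Adj.reachable ?_)
    have hne : c ≠ d := by
      rcases hcd with h' | h'
      · exact ne_of_E h'
      · exact (ne_of_E h').symm
    constructor
    · intro hsn
      exact hne (by
        have := congrFun hsn (Fin.last (L + 1))
        simpa [Fin.snoc_last] using this)
    · rcases hcd with h' | h'
      · exact Or.inl (edge_succ.mpr (Or.inl
          (by simp [Fin.init_snoc, Fin.snoc_last]; exact h')))
      · exact Or.inr (edge_succ.mpr (Or.inl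
          (by simp [Fin.init_snoc, Fin.snoc_last]; exact h')))

theorem crossCell {L : ℕ} {p q : Word S (L + 1)}
    (h : (replGraph F (L + 1)).Adj p q) (a b : S) :
    (replGraph F (L + 2)).Reachable (Fin.snoc p a) (Fin.snoc q b) := by
  have hne : p ≠ q := h.1
  have hsnocne : ∀ (x y : S), Fin.snoc p x ≠ (Fin.snoc q y : Word S (L + 2)) := by
    intro x y hxy
    apply hne
    have := congrArg Fin.init hxy
    simpa [Fin.init_snoc] using this
  rcases h.2 with he | he
  · obtain ⟨x, y, hxy⟩ := F.glue_nonempty (etyp F (L + 1) p q)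
    have hE2 : edge F (L + 2) (Fin.snoc p x) (Fin.snoc q y) := by
      apply edge_succ.mpr
      right
      refine ⟨?_, ?_⟩ <;> simp [Fin.init_snoc, Fin.snoc_last]
      · exact he
      · exact hxy
    exact ((sameCell p a x).trans
      (SimpleGraph.Adj.reachable ⟨hsnocne x y, Or.inl hE2⟩)).trans (sameCell q y b)
  · obtain ⟨x, y, hxy⟩ := F.glue_nonempty (etyp F (L + 1) q p)
    have hE2 : edge F (L + 2) (Fin.snoc q x) (Fin.snoc p y) := by
      apply edge_succ.mpr
      right
      refine ⟨?_, ?_⟩ <;> simp [Fin.init_snoc, Fin.snoc_last]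
      · exact he
      · exact hxy
    exact ((sameCell p a y).trans
      (SimpleGraph.Adj.reachable ⟨(hsnocne y x).symm ∘ Eq.symm ∘ id, Or.inr hE2⟩)).trans
      (sameCell q x b)

theorem replGraph_preconnected (F : System S T) :
    ∀ m : ℕ, (replGraph F m).Preconnected := by
  intro m
  induction m using Nat.strong_induction_on with
  | _ m IH =>
    match m with
    | 0 =>
      intro w v
      have : w = v := funext fun i => i.elim0
      exact this ▸ SimpleGraph.Reachable.refl _
    | 1 =>
      intro w v
      have hgen : ∀ b : S, Relation.ReflTransGen (fun a b => F.E a b ∨ F.E b a) (w 0) b →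
          (replGraph F 1).Reachable w (fun _ => b) := by
        intro b hb
        induction hb with
        | refl =>
          have : w = fun _ => w 0 := funext fun i => congrArg w (Subsingleton.elim i 0)
          exact this ▸ SimpleGraph.Reachable.refl _
        | tail _ hcd ih =>
          rename_i c d _
          refine ih.trans (SimpleGraph.Adj.reachable ?_)
          have hne : c ≠ d := by
            rcases hcd with h' | h'
            · exact ne_of_E h'
            · exact (ne_of_E h').symm
          refine ⟨fun hh => hne (congrFun hh 0), ?_⟩
          rcases hcd with h' | h'
          · exact Or.inl (edge_one.mpr h')
          · exact Or.inr (edge_one.mpr h')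
      have hv : (fun _ => v 0) = v := funext fun i => congrArg v (Subsingleton.elim 0 i)
      exact hv ▸ hgen (v 0) (F.conn (w 0) (v 0))
    | (L + 2) =>
      intro w v
      have hreach := IH (L + 1) (by omega) (Fin.init w) (Fin.init v)
      have hmain : ∀ (p q' : Word S (L + 1)) (_ : (replGraph F (L + 1)).Walk p q') (a b : S),
          (replGraph F (L + 2)).Reachable (Fin.snoc p a) (Fin.snoc q' b) := by
        intro p q' W
        induction W with
        | nil => exact fun a b => sameCell _ a b
        | @cons p1 p2 p3 hadj _ ih =>
          exact fun a b => (crossCell hadj a b).trans (ih b b)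
      obtain ⟨W⟩ := hreach
      have := hmain _ _ W (w (Fin.last (L + 1))) (v (Fin.last (L + 1)))
      simpa [Fin.snoc_init_self] using this

theorem dist_bound {Q : Type} (q0 : Q) (tau : Q → S → Q) (r : Q → S → ℤ) (l : ℤ)
    (Rel : T → Q → Q → ℤ → Prop) (B : ℤ)
    (H1 : ∀ (q : Q) (a b : S), F.E a b →
      Rel (F.typ a b) (tau q a) (tau q b) (r q b - r q a))
    (H2 : ∀ (t : T) (q q' : Q) (d : ℤ) (x y : S), Rel t q q' d → F.glue t x y →
      Rel t (tau q x) (tau q' y) (l * d + (r q' y - r q x)))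
    (H3 : ∀ (t : T) (q q' : Q) (d : ℤ), Rel t q q' d → |d| ≤ B)
    (m : ℕ) (w v : Word S m) :
    |phiW q0 tau r l m v - phiW q0 tau r l m w| ≤ B * ((replGraph F m).dist w v : ℤ) := by
  have hadj : ∀ (x y : Word S m), adjW F m x y →
      |phiW q0 tau r l m y - phiW q0 tau r l m x| ≤ B := by
    intro x y hxy
    rcases hxy with he | he
    · exact H3 _ _ _ _ (key q0 tau r l Rel H1 H2 m x y he).2
    · rw [abs_sub_comm]
      exact H3 _ _ _ _ (key q0 tau r l Rel H1 H2 m y x he).2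
  have hwalk : ∀ (x y : Word S m) (W : (replGraph F m).Walk x y),
      |phiW q0 tau r l m y - phiW q0 tau r l m x| ≤ B * (W.length : ℤ) := by
    intro x y W
    induction W with
    | nil => simp
    | @cons x' u' y' hxy W' ih =>
      have h1 : |phiW q0 tau r l m u' - phiW q0 tau r l m x'| ≤ B := hadj _ _ hxy.2
      calc |phiW q0 tau r l m y' - phiW q0 tau r l m x'|
          ≤ |phiW q0 tau r l m y' - phiW q0 tau r l m u'|
            + |phiW q0 tau r l m u' - phiW q0 tau r l m x'| := abs_sub_le _ _ _
        _ ≤ B * (W'.length : ℤ) + B := add_le_add ih h1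
        _ = B * (((SimpleGraph.Walk.cons hxy W').length : ℤ)) := by
            simp [SimpleGraph.Walk.length_cons]; ring
  have hre : (replGraph F m).Reachable w v := replGraph_preconnected F m w v
  obtain ⟨W, hW⟩ := hre.exists_walk_length_eq_dist
  have := hwalk w v W
  rwa [hW] at this

end SB

section PENT

/-- transition of the pentagon automaton: `true` = active, dies on symbol `tgt + 2`. -/
def ptau (tgt : Fin 5) (q : Bool) (s : Fin 5) : Bool :=
  q && !(s == tgt + 2)

/-- output of the pentagon automaton. -/
def pr (tgt : Fin 5) (q : Bool) (s : Fin 5) : ℤ :=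
  if q then (if s = tgt ∨ s = tgt + 4 then 0 else 1) else 1

/-- the admissible (type, state, state) triples. -/
def pOK (tgt t : Fin 5) (q q' : Bool) : Prop :=
  (q = false ∧ q' = false) ∨
  (t = tgt ∧ q' = true) ∨
  (t = tgt + 1 ∧ q = true ∧ q' = false) ∨
  (t = tgt + 2 ∧ q = false) ∨
  (t = tgt + 3 ∧ q = true) ∨
  (t = tgt + 4 ∧ q = true ∧ q' = true)

instance (tgt t : Fin 5) (q q' : Bool) : Decidable (pOK tgt t q q') := by
  unfold pOK; infer_instance

/-- the edge potential increments of the pentagon automaton. -/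
def pD (tgt t : Fin 5) (q q' : Bool) : ℤ :=
  if q = false ∧ q' = false then 0
  else if t = tgt then (if q' then 1 else 0)
  else if t = tgt + 3 then (if q then -1 else 0)
  else 0

def pRel (tgt : Fin 5) : Fin 5 → Bool → Bool → ℤ → Prop :=
  fun t q q' d => pOK tgt t q q' ∧ d = pD tgt t q q'

theorem pent_H1 (tgt : Fin 5) : ∀ (q : Bool) (a b : Fin 5), pentagon.E a b →
    pRel tgt (pentagon.typ a b) (ptau tgt q a) (ptau tgt q b)
      (pr tgt q b - pr tgt q a) := by
  intro q a b hE
  have hb : b = a + 1 := hE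
  subst hb
  exact (by decide :
    ∀ (tgt : Fin 5) (q : Bool) (a : Fin 5),
      pOK tgt a (ptau tgt q a) (ptau tgt q (a + 1)) ∧
        pr tgt q (a + 1) - pr tgt q a = pD tgt a (ptau tgt q a) (ptau tgt q (a + 1))) tgt q a

theorem pent_H2 (tgt : Fin 5) : ∀ (t : Fin 5) (q q' : Bool) (d : ℤ) (x y : Fin 5),
    pRel tgt t q q' d → pentagon.glue t x y →
    pRel tgt t (ptau tgt q x) (ptau tgt q' y) (2 * d + (pr tgt q' y - pr tgt q x)) := by
  intro t q q' d x y hrel hg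
  obtain ⟨hok, hd⟩ := hrel
  subst hd
  have hg' : (x = t + 1 ∧ y = t) ∨ (x = t + 2 ∧ y = t + 4) := hg
  exact (by decide :
    ∀ (tgt t : Fin 5) (q q' : Bool) (x y : Fin 5),
      pOK tgt t q q' → ((x = t + 1 ∧ y = t) ∨ (x = t + 2 ∧ y = t + 4)) →
      pOK tgt t (ptau tgt q x) (ptau tgt q' y) ∧
        2 * pD tgt t q q' + (pr tgt q' y - pr tgt q x) =
          pD tgt t (ptau tgt q x) (ptau tgt q' y)) tgt t q q' x y hok hg'

theorem pent_H3 (tgt : Fin 5) : ∀ (t : Fin 5) (q q' : Bool) (d : ℤ),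
    pRel tgt t q q' d → |d| ≤ 1 := by
  intro t q q' d hrel
  obtain ⟨hok, hd⟩ := hrel
  subst hd
  exact (by decide : ∀ (tgt t : Fin 5) (q q' : Bool), pOK tgt t q q' →
    |pD tgt t q q'| ≤ 1) tgt t q q' hok

theorem pent_minus (tgt : Fin 5) : ∀ (m : ℕ) (w : Word (Fin 5) m),
    (∀ i, ∃ a, pentagon.glue tgt a (w i)) →
    stW true (ptau tgt) m w = true ∧ phiW true (ptau tgt) (pr tgt) 2 m w = 0 := by
  intro m
  induction m with
  | zero => intro w _; exact ⟨rfl, rfl⟩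
  | succ n ih =>
    intro w hw
    obtain ⟨hst, hph⟩ := ih (Fin.init w) (fun i => hw (Fin.castSucc i))
    have hlast : ∃ a, pentagon.glue tgt a (w (Fin.last n)) := hw (Fin.last n)
    obtain ⟨a, hga⟩ := hlast
    have hy : w (Fin.last n) = tgt ∨ w (Fin.last n) = tgt + 4 := by
      rcases (hga : (a = tgt + 1 ∧ w (Fin.last n) = tgt) ∨
        (a = tgt + 2 ∧ w (Fin.last n) = tgt + 4)) with ⟨_, h⟩ | ⟨_, h⟩
      · exact Or.inl h
      · exact Or.inr h
    have hkey : ptau tgt true (w (Fin.last n)) = true ∧ pr tgt true (w (Fin.last n)) = 0 :=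
      (by decide : ∀ (tgt s : Fin 5), (s = tgt ∨ s = tgt + 4) →
        ptau tgt true s = true ∧ pr tgt true s = 0) tgt _ hy
    constructor
    · show ptau tgt (stW true (ptau tgt) n (Fin.init w)) (w (Fin.last n)) = true
      rw [hst]; exact hkey.1
    · show 2 * phiW true (ptau tgt) (pr tgt) 2 n (Fin.init w)
        + pr tgt (stW true (ptau tgt) n (Fin.init w)) (w (Fin.last n)) = 0
      rw [hst, hph, hkey.2]; ring

theorem pent_plus (tgt : Fin 5) : ∀ (m : ℕ) (w : Word (Fin 5) m),
    (∀ i, ∃ b, pentagon.glue tgt (w i) b) →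
    phiW true (ptau tgt) (pr tgt) 2 m w = 2 ^ m - 1 := by
  intro m
  induction m with
  | zero => intro w _; simp [phiW]
  | succ n ih =>
    intro w hw
    have hph := ih (Fin.init w) (fun i => hw (Fin.castSucc i))
    obtain ⟨b, hgb⟩ := hw (Fin.last n)
    have hx : w (Fin.last n) = tgt + 1 ∨ w (Fin.last n) = tgt + 2 := by
      rcases (hgb : (w (Fin.last n) = tgt + 1 ∧ b = tgt) ∨
        (w (Fin.last n) = tgt + 2 ∧ b = tgt + 4)) with ⟨h, _⟩ | ⟨h, _⟩
      · exact Or.inl h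
      · exact Or.inr h
    have hkey : ∀ q : Bool, pr tgt q (w (Fin.last n)) = 1 :=
      fun q => (by decide : ∀ (tgt s : Fin 5) (q : Bool), (s = tgt + 1 ∨ s = tgt + 2) →
        pr tgt q s = 1) tgt _ q hx
    show 2 * phiW true (ptau tgt) (pr tgt) 2 n (Fin.init w)
        + pr tgt (stW true (ptau tgt) n (Fin.init w)) (w (Fin.last n)) = 2 ^ (n + 1) - 1
    rw [hph, hkey]; ring

theorem pent_final (t : Fin 5) (m : ℕ) (hm : 1 ≤ m)
    (w : Word (Fin 5) m) (hw : w ∈ IsetW pentagon t false m)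
    (v : Word (Fin 5) m) (hv : v ∈ IsetW pentagon t true m) :
    2 ^ m ≤ 2 * (replGraph pentagon m).dist w v := by
  have hdist := dist_bound (F := pentagon) true (ptau t) (pr t) 2 (pRel t) 1
    (pent_H1 t) (pent_H2 t) (pent_H3 t) m w v
  have hφw : phiW true (ptau t) (pr t) 2 m w = 0 :=
    (pent_minus t m w (fun i => hw i)).2
  have hφv : phiW true (ptau t) (pr t) 2 m v = 2 ^ m - 1 :=
    pent_plus t m v (fun i => hv i)
  rw [hφw, hφv, sub_zero, one_mul] at hdist
  have h2m : (2 : ℤ) ≤ 2 ^ m := by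
    calc (2 : ℤ) = 2 ^ 1 := by norm_num
    _ ≤ 2 ^ m := pow_le_pow_right₀ (by norm_num) hm
  have habs : |(2 : ℤ) ^ m - 1| = 2 ^ m - 1 := abs_of_nonneg (by linarith)
  rw [habs] at hdist
  have : (2 : ℤ) ^ m ≤ 2 * ((replGraph pentagon m).dist w v : ℤ) := by linarith
  exact_mod_cast this

end PENT

section GASKET

def gtyp (x y : Fin 3) : Fin 3 :=
  if x = 0 ∧ y = 1 then 0 else if x = 1 ∧ y = 2 then 1 else 2

def grF : Fin 3 → Fin 3 → ℤ
  | 0, 0 => 0 | 0, 1 => 2 | 0, 2 => 1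
  | 1, 0 => 1 | 1, 1 => 0 | 1, 2 => 2
  | 2, 0 => 0 | 2, 1 => 1 | 2, 2 => 2

def gD : Fin 3 → Fin 3 → ℤ
  | 0, 0 => 2 | 0, 1 => -1 | 0, 2 => 1
  | 1, 0 => -1 | 1, 1 => 2 | 1, 2 => 1
  | 2, 0 => 1 | 2, 1 => 1 | 2, 2 => 2

def gRel (tgt : Fin 3) : Fin 3 → Unit → Unit → ℤ → Prop :=
  fun t _ _ d => d = gD tgt t

theorem gask_H1 (tgt : Fin 3) : ∀ (q : Unit) (a b : Fin 3), gasket.E a b →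
    gRel tgt (gasket.typ a b) () () (grF tgt b - grF tgt a) := by
  intro _ a b hE
  exact (by decide : ∀ (tgt a b : Fin 3), gasketE a b →
    grF tgt b - grF tgt a = gD tgt (gtyp a b)) tgt a b hE

theorem gask_H2 (tgt : Fin 3) : ∀ (t : Fin 3) (q q' : Unit) (d : ℤ) (x y : Fin 3),
    gRel tgt t q q' d → gasket.glue t x y →
    gRel tgt t () () (2 * d + (grF tgt y - grF tgt x)) := by
  intro t _ _ d x y hd hg
  subst hd
  exact (by decide : ∀ (tgt t x y : Fin 3),
    ((t = 0 ∧ x = 1 ∧ y = 0) ∨ (t = 1 ∧ x = 2 ∧ y = 1) ∨ (t = 2 ∧ x = 2 ∧ y = 0)) →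
    (2 * gD tgt t + (grF tgt y - grF tgt x) = gD tgt t : Prop)) tgt t x y hg

theorem gask_H3 (tgt : Fin 3) : ∀ (t : Fin 3) (q q' : Unit) (d : ℤ),
    gRel tgt t q q' d → |d| ≤ 2 := by
  intro t _ _ d hd
  subst hd
  exact (by decide : ∀ (tgt t : Fin 3), |gD tgt t| ≤ 2) tgt t

theorem gask_minus (tgt : Fin 3) : ∀ (m : ℕ) (w : Word (Fin 3) m),
    (∀ i, ∃ a, gasket.glue tgt a (w i)) →
    phiW () (fun _ _ => ()) (fun _ => grF tgt) 2 m w = 0 := by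
  intro m
  induction m with
  | zero => intro w _; rfl
  | succ n ih =>
    intro w hw
    have hph := ih (Fin.init w) (fun i => hw (Fin.castSucc i))
    obtain ⟨a, hga⟩ := hw (Fin.last n)
    have hkey : grF tgt (w (Fin.last n)) = 0 :=
      (by decide : ∀ (tgt a y : Fin 3),
        ((tgt = 0 ∧ a = 1 ∧ y = 0) ∨ (tgt = 1 ∧ a = 2 ∧ y = 1) ∨ (tgt = 2 ∧ a = 2 ∧ y = 0)) →
        grF tgt y = 0) tgt a _ hga
    show 2 * phiW () (fun _ _ => ()) (fun _ => grF tgt) 2 n (Fin.init w)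
        + grF tgt (w (Fin.last n)) = 0
    rw [hph, hkey]; ring

theorem gask_plus (tgt : Fin 3) : ∀ (m : ℕ) (w : Word (Fin 3) m),
    (∀ i, ∃ b, gasket.glue tgt (w i) b) →
    phiW () (fun _ _ => ()) (fun _ => grF tgt) 2 m w = 2 * (2 ^ m - 1) := by
  intro m
  induction m with
  | zero => intro w _; simp [phiW]
  | succ n ih =>
    intro w hw
    have hph := ih (Fin.init w) (fun i => hw (Fin.castSucc i))
    obtain ⟨b, hgb⟩ := hw (Fin.last n)
    have hkey : grF tgt (w (Fin.last n)) = 2 :=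
      (by decide : ∀ (tgt x b : Fin 3),
        ((tgt = 0 ∧ x = 1 ∧ b = 0) ∨ (tgt = 1 ∧ x = 2 ∧ b = 1) ∨ (tgt = 2 ∧ x = 2 ∧ b = 0)) →
        grF tgt x = 2) tgt _ b hgb
    show 2 * phiW () (fun _ _ => ()) (fun _ => grF tgt) 2 n (Fin.init w)
        + grF tgt (w (Fin.last n)) = 2 * (2 ^ (n + 1) - 1)
    rw [hph, hkey]; ring

theorem gask_final (t : Fin 3) (m : ℕ) (hm : 1 ≤ m)
    (w : Word (Fin 3) m) (hw : w ∈ IsetW gasket t false m)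
    (v : Word (Fin 3) m) (hv : v ∈ IsetW gasket t true m) :
    2 ^ m ≤ 2 * (replGraph gasket m).dist w v := by
  have hdist := dist_bound (F := gasket) () (fun _ _ => ()) (fun _ => grF t) 2 (gRel t) 2
    (gask_H1 t) (gask_H2 t) (gask_H3 t) m w v
  have hφw : phiW () (fun _ _ => ()) (fun _ => grF t) 2 m w = 0 :=
    gask_minus t m w (fun i => hw i)
  have hφv : phiW () (fun _ _ => ()) (fun _ => grF t) 2 m v = 2 * (2 ^ m - 1) :=
    gask_plus t m v (fun i => hv i)
  rw [hφw, hφv, sub_zero] at hdist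
  have h2m : (2 : ℤ) ≤ 2 ^ m := by
    calc (2 : ℤ) = 2 ^ 1 := by norm_num
    _ ≤ 2 ^ m := pow_le_pow_right₀ (by norm_num) hm
  have habs : |(2 : ℤ) * (2 ^ m - 1)| = 2 * (2 ^ m - 1) := abs_of_nonneg (by linarith)
  rw [habs] at hdist
  have : (2 : ℤ) ^ m ≤ 2 * ((replGraph gasket m).dist w v : ℤ) := by linarith
  exact_mod_cast this

end GASKET


section CUB
variable {d L s : ℕ} (cub : CubicalIGS d L s) (j : Fin d)

def cR : Unit → ↥cub.Symb → ℤ := fun _ x => ((x.1.1 j : ℕ) : ℤ)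

def cRel : Fin d → Unit → Unit → ℤ → Prop :=
  fun t _ _ dd => dd = if t = j then 1 else 0

theorem cub_H1 [Nonempty (Fin d)] : ∀ (q : Unit) (a b : ↥cub.Symb), cub.sys.E a b →
    cRel j (cub.sys.typ a b) () () (cR cub j () b - cR cub j () a) := by
  intro _ a b hE
  have ham := cub.edge_amb a b hE
  show ((b.1.1 j : ℕ) : ℤ) - ((a.1.1 j : ℕ) : ℤ) = if cub.sys.typ a b = j then 1 else 0
  by_cases ht : cub.sys.typ a b = j
  · rw [if_pos ht]
    have h2 := ham.2
    rw [ht] at h2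
    omega
  · rw [if_neg ht]
    have h1 := ham.1 j (fun h => ht h.symm)
    rw [h1]
    omega

theorem cub_H2 [Nonempty (Fin d)] : ∀ (t : Fin d) (q q' : Unit) (dd : ℤ) (x y : ↥cub.Symb),
    cRel j t q q' dd → cub.sys.glue t x y →
    cRel j t () () ((L : ℤ) * dd + (cR cub j () y - cR cub j () x)) := by
  intro t _ _ dd x y hd hg
  subst hd
  have ham := cub.glue_amb t x y hg
  have hL := cub.hL
  show (L : ℤ) * (if t = j then 1 else 0) + (((y.1.1 j : ℕ) : ℤ) - ((x.1.1 j : ℕ) : ℤ))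
      = if t = j then 1 else 0
  by_cases ht : t = j
  · rw [if_pos ht]
    obtain ⟨_, hxL, hy0, _⟩ := ham
    rw [ht] at hxL hy0
    rw [hxL, hy0]
    push_cast [Nat.cast_sub (show 1 ≤ L by omega)]
    ring
  · rw [if_neg ht]
    have h1 := ham.1 j (fun h => ht h.symm)
    rw [h1]
    ring

theorem cub_H3 : ∀ (t : Fin d) (q q' : Unit) (dd : ℤ),
    cRel j t q q' dd → |dd| ≤ 1 := by
  intro t _ _ dd hd
  subst hd
  split_ifs <;> norm_num

theorem cub_minus : ∀ (m : ℕ) (w : Word (↥cub.Symb) m),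
    (∀ i, ∃ a, cub.sys.glue j a (w i)) →
    phiW () (fun _ _ => ()) (cR cub j) (L : ℤ) m w = 0 := by
  intro m
  induction m with
  | zero => intro w _; rfl
  | succ n ih =>
    intro w hw
    have hph := ih (Fin.init w) (fun i => hw (Fin.castSucc i))
    obtain ⟨a, hga⟩ := hw (Fin.last n)
    have hkey : (((w (Fin.last n)).1.1 j : ℕ) : ℤ) = 0 := by
      have := (cub.glue_amb j a (w (Fin.last n)) hga).2.2.1
      omega
    show (L : ℤ) * phiW () (fun _ _ => ()) (cR cub j) (L : ℤ) n (Fin.init w)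
        + (((w (Fin.last n)).1.1 j : ℕ) : ℤ) = 0
    rw [hph, hkey]; ring

theorem cub_plus : ∀ (m : ℕ) (w : Word (↥cub.Symb) m),
    (∀ i, ∃ b, cub.sys.glue j (w i) b) →
    phiW () (fun _ _ => ()) (cR cub j) (L : ℤ) m w = (L : ℤ) ^ m - 1 := by
  intro m
  induction m with
  | zero => intro w _; simp [phiW]
  | succ n ih =>
    intro w hw
    have hL := cub.hL
    have hph := ih (Fin.init w) (fun i => hw (Fin.castSucc i))
    obtain ⟨b, hgb⟩ := hw (Fin.last n)
    have hkey : (((w (Fin.last n)).1.1 j : ℕ) : ℤ) = (L : ℤ) - 1 := by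
      have := (cub.glue_amb j (w (Fin.last n)) b hgb).2.1
      omega
    show (L : ℤ) * phiW () (fun _ _ => ()) (cR cub j) (L : ℤ) n (Fin.init w)
        + (((w (Fin.last n)).1.1 j : ℕ) : ℤ) = (L : ℤ) ^ (n + 1) - 1
    rw [hph, hkey]; ring

theorem cub_final (m : ℕ) (hm : 1 ≤ m)
    (w : Word (↥cub.Symb) m) (hw : w ∈ IsetW cub.sys j false m)
    (v : Word (↥cub.Symb) m) (hv : v ∈ IsetW cub.sys j true m) :
    haveI : Nonempty (Fin d) := ⟨⟨0, cub.hd⟩⟩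
    L ^ m ≤ 2 * (replGraph cub.sys m).dist w v := by
  haveI : Nonempty (Fin d) := ⟨⟨0, cub.hd⟩⟩
  have hdist := dist_bound (F := cub.sys) () (fun _ _ => ()) (cR cub j) (L : ℤ) (cRel j) 1
    (cub_H1 cub j) (cub_H2 cub j) (cub_H3 j) m w v
  have hφw : phiW () (fun _ _ => ()) (cR cub j) (L : ℤ) m w = 0 :=
    cub_minus cub j m w (fun i => hw i)
  have hφv : phiW () (fun _ _ => ()) (cR cub j) (L : ℤ) m v = (L : ℤ) ^ m - 1 :=
    cub_plus cub j m v (fun i => hv i)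
  rw [hφw, hφv, sub_zero, one_mul] at hdist
  have hLm : (3 : ℤ) ≤ (L : ℤ) ^ m := by
    calc (3 : ℤ) = 3 ^ 1 := by norm_num
    _ ≤ 3 ^ m := pow_le_pow_right₀ (by norm_num) hm
    _ ≤ (L : ℤ) ^ m := pow_le_pow_left₀ (by norm_num) (by exact_mod_cast cub.hL) m
  have habs : |(L : ℤ) ^ m - 1| = (L : ℤ) ^ m - 1 := abs_of_nonneg (by linarith)
  rw [habs] at hdist
  have hZ : (L : ℤ) ^ m ≤ 2 * ((replGraph cub.sys m).dist w v : ℤ) := by linarith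
  exact_mod_cast hZ

end CUB
end AUXPROOF

/-- For a cubical iterated graph system (with scaling constant `L*`),
and for the Sierpiński gasket and pentagonal Sierpiński carpet systems (with `L* = 2`),
the distance in `G_m` between the opposite faces `I_{t,-}^{(m)}` and `I_{t,+}^{(m)}` is
at least `(1/2) · L*^m` for every type `t` and every `m ≥ 1`. -/
theorem statement13 :
    (∀ (d L s : ℕ) (cub : CubicalIGS d L s),
      letI : Nonempty (Fin d) := ⟨⟨0, cub.hd⟩⟩
      ∀ (j : Fin d) (m : ℕ), 1 ≤ m →
        ∀ w ∈ IsetW cub.sys j false m, ∀ v ∈ IsetW cub.sys j true m,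
          L ^ m ≤ 2 * (replGraph cub.sys m).dist w v) ∧
    (∀ (t : Fin 3) (m : ℕ), 1 ≤ m →
      ∀ w ∈ IsetW gasket t false m, ∀ v ∈ IsetW gasket t true m,
        2 ^ m ≤ 2 * (replGraph gasket m).dist w v) ∧
    (∀ (t : Fin 5) (m : ℕ), 1 ≤ m →
      ∀ w ∈ IsetW pentagon t false m, ∀ v ∈ IsetW pentagon t true m,
        2 ^ m ≤ 2 * (replGraph pentagon m).dist w v) := by
  refine ⟨?_, gask_final, pent_final⟩
  intro d L s cub
  exact fun j m hm w hw v hv => cub_final cub j m hm w hw v hv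

end IGSP
end
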